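/- Let d : ℝ × ℝ → [0,∞) be continuous on ℝ², twice continuously differentiable on ℝ² \ Δ (Δ the diagonal), with ∂₁∂₂ d(a,b) ≥ 0 for all (a,b) ∉ Δ, and symmetric (d(x,y) = d(y,x)) with d(x,x) = 0. Then for any real numbers x < y < z, d(x,z) ≤ d(x,y) + d(y,z). -/

import Mathlib

def IsDistance (d : ℝ → ℝ → ℝ) : Prop :=
  (∀ x y, 0 ≤ d x y) ∧ (∀ x y, d x y = 0 ↔ x = y) ∧
  (∀ x y, d x y = d y x) ∧ (∀ x y z, d x z ≤ d x y + d y z)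
theorem triangle_of_cross_deriv_nonneg_continuous (d : ℝ → ℝ → ℝ)
    (hnonneg : ∀ x y, 0 ≤ d x y)
    (hcont : Continuous fun p : ℝ × ℝ => d p.1 p.2)
    (hC2 : ContDiffOn ℝ 2 (fun p : ℝ × ℝ => d p.1 p.2) {p : ℝ × ℝ | p.1 ≠ p.2})
    (hmix : ∀ a b : ℝ, a ≠ b → 0 ≤ deriv (fun s => deriv (fun t => d s t) b) a)
    (hsymm : ∀ x y, d x y = d y x) (hdiag : ∀ x, d x x = 0) :
    ∀ x y z : ℝ, x < y → y < z → d x z ≤ d x y + d y z := by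
  intro x y z hxy hyz
  set f : ℝ × ℝ → ℝ := fun p => d p.1 p.2 with hfdef
  set U : Set (ℝ × ℝ) := {p : ℝ × ℝ | p.1 ≠ p.2} with hUdef
  have hU : IsOpen U := isOpen_ne_fun continuous_fst continuous_snd
  have hdiff : ∀ p ∈ U, DifferentiableAt ℝ f p := fun p hp =>
    (hC2.differentiableOn (by norm_num)).differentiableAt (hU.mem_nhds hp)
  set g2 : ℝ × ℝ → ℝ := fun p => fderiv ℝ f p (0, 1) with hg2def
  have hg2C1 : ContDiffOn ℝ 1 g2 U := by
    have h1 : ContDiffOn ℝ 1 (fderiv ℝ f) U := hC2.fderiv_of_isOpen hU (by norm_num)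
    exact (ContinuousLinearMap.apply ℝ ℝ ((0:ℝ), (1:ℝ))).contDiff.comp_contDiffOn h1
  have hP2 : ∀ s t : ℝ, s ≠ t → HasDerivAt (fun t' => d s t') (g2 (s, t)) t := by
    intro s t hst
    have h0 : HasDerivAt (fun t' : ℝ => (s, t')) ((0 : ℝ), (1 : ℝ)) t :=
      HasDerivAt.prodMk (hasDerivAt_const t s) (hasDerivAt_id t)
    have := ((hdiff (s, t) hst).hasFDerivAt).comp_hasDerivAt t h0
    exact this
  -- inner monotonicity
  have hmono : ∀ t : ℝ, y < t → g2 (x, t) ≤ g2 (y, t) := by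
    intro t ht
    have hsub : ∀ s ∈ Set.Icc x y, (s, t) ∈ U := by
      intro s hs
      simp only [hUdef, Set.mem_setOf_eq]
      exact ne_of_lt (lt_of_le_of_lt hs.2 ht)
    have key : MonotoneOn (fun s => g2 (s, t)) (Set.Icc x y) := by
      apply monotoneOn_of_deriv_nonneg (convex_Icc x y)
      · exact (hg2C1.continuousOn.comp
          ((continuous_id.prodMk continuous_const).continuousOn) hsub)
      · rw [interior_Icc]
        intro s hs
        have hdg2 : DifferentiableAt ℝ g2 (s, t) :=
          (hg2C1.differentiableOn one_ne_zero).differentiableAt (hU.mem_nhds (hsub s (Set.mem_Icc_of_Ioo hs)))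
        exact (hdg2.comp s ((differentiableAt_id (𝕜 := ℝ) (x := s) |>.prodMk (differentiableAt_const t)))).differentiableWithinAt
      · rw [interior_Icc]
        intro s hs
        have hst : s ≠ t := ne_of_lt (lt_trans hs.2 ht)
        have heq : (fun s' => deriv (fun t' => d s' t') t) =ᶠ[nhds s] (fun s' => g2 (s', t)) := by
          have hnb : Set.Iio t ∈ nhds s := Iio_mem_nhds (lt_trans hs.2 ht)
          filter_upwards [hnb] with s' hs'
          exact ((hP2 s' t (ne_of_lt hs')).deriv)
        have := hmix s t hst
        rwa [heq.deriv_eq] at this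
    exact key (Set.left_mem_Icc.mpr hxy.le) (Set.right_mem_Icc.mpr hxy.le) hxy.le
  -- outer monotonicity
  have hG : MonotoneOn (fun t => d y t - d x t) (Set.Icc y z) := by
    apply monotoneOn_of_deriv_nonneg (convex_Icc y z)
    · apply ContinuousOn.sub
      · exact ((hcont.comp (continuous_const.prodMk continuous_id)).continuousOn)
      · exact ((hcont.comp (continuous_const.prodMk continuous_id)).continuousOn)
    · rw [interior_Icc]
      intro t ht
      exact ((hP2 y t (ne_of_lt ht.1)).sub (hP2 x t (ne_of_lt (lt_trans hxy ht.1)))).differentiableAt.differentiableWithinAt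
    · rw [interior_Icc]
      intro t ht
      have hd := ((hP2 y t (ne_of_lt ht.1)).sub (hP2 x t (ne_of_lt (lt_trans hxy ht.1)))).deriv
      rw [show (fun t => d y t - d x t) = ((fun t' => d y t') - fun t' => d x t') from rfl, hd]
      have := hmono t ht.1
      linarith
  have hfin := hG (Set.left_mem_Icc.mpr hyz.le) (Set.right_mem_Icc.mpr hyz.le) hyz.le
  simp only [hdiag] at hfin
  linarith
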